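/- Let Y be a random variable on a probability space taking values in a finite subset S of the real numbers, and suppose the diameter of S (the maximum distance between two points of S) is at most D. Then the variance of Y satisfies Var[Y] ≤ D² · H(Y), where H(Y) is the Shannon entropy of Y measured in nats (natural logarithm). (This is the paper's inequality Var[Y] ≤ K · H(Y) for discrete distributions with bounded support, with the explicit constant K = D².) -/

import Mathlib

open MeasureTheory ProbabilityTheory Real

/-- Shannon entropy (in nats) of a random variable `Y` taking values in the finite set `S`:
`H(Y) = ∑ s ∈ S, -P(Y = s) * log P(Y = s)` (with the convention `0 * log 0 = 0`). -/
noncomputable def finEntropy {Ω α : Type*} [MeasurableSpace Ω]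
    (μ : Measure Ω) (S : Finset α) (Y : Ω → α) : ℝ :=
  ∑ s ∈ S, Real.negMulLog (μ (Y ⁻¹' {s})).toReal

lemma mul_one_sub_le_negMulLog {p : ℝ} (hp0 : 0 ≤ p) (hp1 : p ≤ 1) :
    p * (1 - p) ≤ Real.negMulLog p := by
  rcases eq_or_lt_of_le hp0 with h | h
  · simp [← h, Real.negMulLog]
  · have hlog : Real.log p ≤ p - 1 := Real.log_le_sub_one_of_pos h
    have : 1 - p ≤ -Real.log p := by linarith
    have := mul_le_mul_of_nonneg_left this (le_of_lt h)
    simpa [Real.negMulLog, mul_comm] using this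

lemma key_finite (S : Finset ℝ) (hSne : S.Nonempty) (p : ℝ → ℝ)
    (hp0 : ∀ s ∈ S, 0 ≤ p s) (hp1 : ∑ s ∈ S, p s = 1)
    (D : ℝ) (hdiam : ∀ s ∈ S, ∀ t ∈ S, |s - t| ≤ D) :
    (∑ s ∈ S, p s * s ^ 2) - (∑ s ∈ S, p s * s) ^ 2
      ≤ D ^ 2 * ∑ s ∈ S, Real.negMulLog (p s) := by
  obtain ⟨s₀, hs₀⟩ := hSne
  have hD0 : 0 ≤ D := by simpa using hdiam s₀ hs₀ s₀ hs₀
  set m : ℝ := ∑ s ∈ S, p s * s with hm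
  have hple1 : ∀ s ∈ S, p s ≤ 1 := by
    intro s hs
    calc p s ≤ ∑ t ∈ S, p t := Finset.single_le_sum hp0 hs
    _ = 1 := hp1
  have hsm : ∀ s ∈ S, |s - m| ≤ D * (1 - p s) := by
    intro s hs
    have h1 : s - m = ∑ t ∈ S.erase s, p t * (s - t) := by
      have : ∑ t ∈ S, p t * (s - t) = s - m := by
        simp only [mul_sub]
        rw [Finset.sum_sub_distrib, ← Finset.sum_mul, hp1, hm]
        ring
      rw [← this, ← Finset.sum_erase S (a := s) (by simp)]
    rw [h1]
    calc |∑ t ∈ S.erase s, p t * (s - t)|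
        ≤ ∑ t ∈ S.erase s, |p t * (s - t)| := Finset.abs_sum_le_sum_abs _ _
      _ ≤ ∑ t ∈ S.erase s, p t * D := by
          apply Finset.sum_le_sum
          intro t ht
          rw [abs_mul, abs_of_nonneg (hp0 t (Finset.mem_of_mem_erase ht))]
          exact mul_le_mul_of_nonneg_left
            (hdiam s hs t (Finset.mem_of_mem_erase ht))
            (hp0 t (Finset.mem_of_mem_erase ht))
      _ = (1 - p s) * D := by
          rw [← Finset.sum_mul]
          congr 1
          have := Finset.sum_erase_add S p hs
          linarith [hp1 ▸ this]
      _ = D * (1 - p s) := by ring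
  have hvar : (∑ s ∈ S, p s * s ^ 2) - m ^ 2 = ∑ s ∈ S, p s * (s - m) ^ 2 := by
    have : ∀ s ∈ S, p s * (s - m) ^ 2
        = p s * s ^ 2 - 2 * m * (p s * s) + m ^ 2 * p s := by
      intro s _; ring
    rw [Finset.sum_congr rfl this, Finset.sum_add_distrib, Finset.sum_sub_distrib,
      ← Finset.mul_sum, ← Finset.mul_sum, hp1, ← hm]
    ring
  rw [hvar]
  calc ∑ s ∈ S, p s * (s - m) ^ 2
      ≤ ∑ s ∈ S, D ^ 2 * (p s * (1 - p s)) := by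
        apply Finset.sum_le_sum
        intro s hs
        have h2 : (s - m) ^ 2 ≤ (D * (1 - p s)) ^ 2 := by
          rw [← sq_abs (s - m)]
          exact pow_le_pow_left₀ (abs_nonneg _) (hsm s hs) 2
        have h3 : (1 - p s) ^ 2 ≤ 1 - p s := by
          nlinarith [hple1 s hs, hp0 s hs]
        have h4 : p s * (s - m) ^ 2 ≤ p s * (D ^ 2 * (1 - p s)) := by
          apply mul_le_mul_of_nonneg_left _ (hp0 s hs)
          calc (s - m) ^ 2 ≤ (D * (1 - p s)) ^ 2 := h2
            _ = D ^ 2 * (1 - p s) ^ 2 := by ring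
            _ ≤ D ^ 2 * (1 - p s) := by
                exact mul_le_mul_of_nonneg_left h3 (by positivity)
        linarith
    _ ≤ ∑ s ∈ S, D ^ 2 * Real.negMulLog (p s) := by
        apply Finset.sum_le_sum
        intro s hs
        exact mul_le_mul_of_nonneg_left
          (mul_one_sub_le_negMulLog (hp0 s hs) (hple1 s hs)) (by positivity)
    _ = D ^ 2 * ∑ s ∈ S, Real.negMulLog (p s) := by rw [Finset.mul_sum]

/-- If `Y` takes values in a finite set `S ⊆ ℝ` of diameter at most `D`, then
`Var[Y] ≤ D² · H(Y)` where `H(Y)` is the Shannon entropy in nats. -/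
theorem variance_le_sq_diam_mul_entropy
    {Ω : Type*} [MeasurableSpace Ω] (μ : Measure Ω) [IsProbabilityMeasure μ]
    (Y : Ω → ℝ) (hYmeas : Measurable Y)
    (S : Finset ℝ) (hYS : ∀ ω, Y ω ∈ S)
    (D : ℝ) (hdiam : ∀ s ∈ S, ∀ t ∈ S, |s - t| ≤ D) :
    variance Y μ ≤ D ^ 2 * finEntropy μ S Y := by
  unfold finEntropy
  have hΩ : Nonempty Ω := by
    by_contra h
    rw [not_nonempty_iff] at h
    have h1 : μ Set.univ = 1 := measure_univ
    rw [Set.univ_eq_empty_iff.2 h, measure_empty] at h1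
    exact zero_ne_one h1
  have hSne : S.Nonempty := ⟨Y (Classical.arbitrary Ω), hYS _⟩
  set p : ℝ → ℝ := fun s => (μ (Y ⁻¹' {s})).toReal with hp
  have hmeasS : ∀ s : ℝ, MeasurableSet (Y ⁻¹' {s}) :=
    fun s => hYmeas (measurableSet_singleton s)
  have hp0 : ∀ s ∈ S, 0 ≤ p s := fun s _ => ENNReal.toReal_nonneg
  -- sum to one
  have hunion : ⋃ s ∈ S, Y ⁻¹' {s} = Set.univ := by
    ext ω
    simp only [Set.mem_iUnion, Set.mem_preimage, Set.mem_singleton_iff, Set.mem_univ, iff_true]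
    exact ⟨Y ω, hYS ω, rfl⟩
  have hsum1 : ∑ s ∈ S, p s = 1 := by
    have hdisj : (S : Set ℝ).PairwiseDisjoint (fun s => Y ⁻¹' {s}) := by
      intro a _ b _ hab
      apply Set.disjoint_left.2
      intro ω ha hb
      exact hab (by simp only [Set.mem_preimage, Set.mem_singleton_iff] at ha hb; rw [← ha, ← hb])
    have := measure_biUnion_finset (μ := μ) hdisj (fun s _ => hmeasS s)
    rw [hunion, measure_univ] at this
    have h2 : (∑ s ∈ S, μ (Y ⁻¹' {s})).toReal = ∑ s ∈ S, p s :=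
      ENNReal.toReal_sum (fun s _ => measure_ne_top μ _)
    rw [← h2, ← this]
    simp
  -- integral formula
  have hint : ∀ g : ℝ → ℝ, ∫ ω, g (Y ω) ∂μ = ∑ s ∈ S, p s * g s := by
    intro g
    have heq : ∀ ω, g (Y ω) = ∑ s ∈ S, (Y ⁻¹' {s}).indicator (fun _ => g s) ω := by
      intro ω
      have h' : ∀ s ∈ S, (Y ⁻¹' {s}).indicator (fun _ => g s) ω
          = if Y ω = s then g s else 0 := by
        intro s _
        by_cases h : Y ω = s
        · rw [Set.indicator_of_mem (by simpa using h), if_pos h]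
        · rw [Set.indicator_of_notMem (by simpa using h), if_neg h]
      rw [Finset.sum_congr rfl h', Finset.sum_ite_eq S (Y ω) g, if_pos (hYS ω)]
    calc ∫ ω, g (Y ω) ∂μ
        = ∫ ω, ∑ s ∈ S, (Y ⁻¹' {s}).indicator (fun _ => g s) ω ∂μ := by
          exact integral_congr_ae (ae_of_all _ heq)
      _ = ∑ s ∈ S, ∫ ω, (Y ⁻¹' {s}).indicator (fun _ => g s) ω ∂μ := by
          exact integral_finset_sum S
            (fun s _ => (integrable_const (g s)).indicator (hmeasS s))
      _ = ∑ s ∈ S, p s * g s := by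
          apply Finset.sum_congr rfl
          intro s _
          rw [integral_indicator_const _ (hmeasS s)]
          simp [hp, mul_comm, measureReal_def]
  -- Memℒp
  have hmem : MemLp Y 2 μ := by
    apply MemLp.of_bound hYmeas.aestronglyMeasurable (S.sup' hSne (fun s => |s|))
    filter_upwards with ω
    rw [Real.norm_eq_abs]
    exact Finset.le_sup' (fun s => |s|) (hYS ω)
  rw [variance_eq_sub hmem]
  have hY2 : μ[Y ^ 2] = ∑ s ∈ S, p s * s ^ 2 := by
    have : μ[Y ^ 2] = ∫ ω, (Y ω) ^ 2 ∂μ := by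
      apply integral_congr_ae (ae_of_all _ _)
      intro ω; simp
    rw [this, hint (fun x => x ^ 2)]
  have hY1 : μ[Y] = ∑ s ∈ S, p s * s := hint id
  rw [hY2, hY1]
  exact key_finite S hSne p hp0 hsum1 D hdiam
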